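/- arXiv:1004.1014 — 4 statements merged into one kernel-verified Lean document; each statement's English description precedes it below -/
import Mathlib

section
/- Let K ≥ 1 and let k = (k₁,…,kₙ) ∈ ℤⁿ \ {0} have coprime components and satisfy Σᵢ |kᵢ| ≤ K. Then there exists a matrix A ∈ GL(n,ℤ) whose first row equals k, such that every row of A has ℓ¹-norm at most K. -/
open Matrix

theorem aux_gl : ∀ (n : ℕ) (k : Fin (n+1) → ℤ), Finset.univ.gcd k = 1 →
    ∃ A : Matrix (Fin (n+1)) (Fin (n+1)) ℤ, IsUnit A.det ∧ (∀ j, A 0 j = k j) ∧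
      ∀ i, i ≠ 0 → (∑ j, |A i j|) ≤ max 1 (∑ j, |k j|) := by
  intro n
  induction n with
  | zero =>
    intro k hg
    have h0 : IsUnit (k 0) := by
      have hdvd : k 0 ∣ Finset.univ.gcd k := by
        refine Finset.dvd_gcd fun i _ => ?_
        fin_cases i; exact dvd_rfl
      rw [hg] at hdvd
      exact isUnit_of_dvd_one hdvd
    refine ⟨Matrix.of fun _ _ => k 0, ?_, ?_, ?_⟩
    · rwa [Matrix.det_fin_one]
    · intro j; have : j = 0 := Fin.fin_one_eq_zero j; rw [this]; rfl
    · intro i hi; exact absurd (Fin.fin_one_eq_zero i) hi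
  | succ n IH =>
    intro k hg
    set kl : ℤ := k (Fin.last (n+1)) with hkl_def
    by_cases hk' : ∀ i : Fin (n+1), k i.castSucc = 0
    · -- special case: truncation is zero, k = (0,...,0,±1)
      have hklu : IsUnit kl := by
        have hdvd : kl ∣ Finset.univ.gcd k := by
          refine Finset.dvd_gcd fun i _ => ?_
          induction i using Fin.lastCases with
          | last => exact dvd_rfl
          | cast i => rw [hk' i]; exact dvd_zero _
        rw [hg] at hdvd
        exact isUnit_of_dvd_one hdvd
      refine ⟨Matrix.of fun i j => if i = 0 then k j else if (j : ℕ) + 1 = (i : ℕ) then 1 else 0,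
        ?_, ?_, ?_⟩
      · rw [Matrix.det_succ_row_zero]
        rw [Finset.sum_eq_single_of_mem (Fin.last (n+1)) (Finset.mem_univ _)]
        · have hminor : (Matrix.of fun i j => if i = 0 then k j else
              if (j : ℕ) + 1 = (i : ℕ) then 1 else 0 :
              Matrix (Fin (n+2)) (Fin (n+2)) ℤ).submatrix Fin.succ (Fin.last (n+1)).succAbove
              = (1 : Matrix (Fin (n+1)) (Fin (n+1)) ℤ) := by
            ext i j
            simp only [Matrix.submatrix_apply, Fin.succAbove_last, Matrix.of_apply,
              Matrix.one_apply]
            rw [if_neg (Fin.succ_ne_zero i)]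
            by_cases h : i = j
            · subst h; simp
            · have hne : ¬((Fin.castSucc j : ℕ) + 1 = (Fin.succ i : ℕ)) := by
                simp only [Fin.coe_castSucc, Fin.val_succ]
                intro hh; exact h (Fin.ext (by omega))
              rw [if_neg hne, if_neg h]
          rw [hminor, Matrix.det_one, mul_one]
          exact (isUnit_one.neg.pow _).mul hklu
        · intro j _ hj
          obtain ⟨j', rfl⟩ := Fin.exists_castSucc_eq.mpr hj
          simp [hk' j']
      · intro j; simp
      · intro i hi
        have hi1 : 1 ≤ (i : ℕ) := by
          rcases Nat.eq_zero_or_pos (i : ℕ) with h | h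
          · exact absurd (Fin.ext h) hi
          · exact h
        have hcard : ∀ j : Fin (n+2),
            ((j : ℕ) + 1 = (i : ℕ)) ↔ j = ⟨(i : ℕ) - 1, by omega⟩ := by
          intro j; rw [Fin.ext_iff]; simp; omega
        calc (∑ j, |(Matrix.of fun i j => if i = 0 then k j else
                if (j : ℕ) + 1 = (i : ℕ) then 1 else 0 :
                Matrix (Fin (n+2)) (Fin (n+2)) ℤ) i j|)
            = ∑ j, (if j = (⟨(i : ℕ) - 1, by omega⟩ : Fin (n+2)) then 1 else 0) := by
              refine Finset.sum_congr rfl fun j _ => ?_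
              rw [Matrix.of_apply, if_neg hi]
              by_cases h : j = (⟨(i : ℕ) - 1, by omega⟩ : Fin (n+2))
              · rw [if_pos ((hcard j).mpr h), if_pos h]; simp
              · rw [if_neg (fun hh => h ((hcard j).mp hh)), if_neg h]; simp
          _ = 1 := by rw [Finset.sum_ite_eq' Finset.univ]; simp
          _ ≤ max 1 (∑ j, |k j|) := le_max_left _ _
    · -- main case: truncation k' is nonzero
      push_neg at hk'
      obtain ⟨i₀, hi₀⟩ := hk'
      set k' : Fin (n+1) → ℤ := fun i => k i.castSucc with hk'def
      set d : ℤ := Finset.univ.gcd k' with hd_def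
      have hd0 : d ≠ 0 := by
        intro h
        rw [hd_def] at h
        exact hi₀ (Finset.gcd_eq_zero_iff.mp h i₀ (Finset.mem_univ _))
      have hd1 : 1 ≤ |d| := Int.one_le_abs (by exact hd0)
      have hdvd : ∀ i, d ∣ k' i := fun i => Finset.gcd_dvd (Finset.mem_univ i)
      set m : Fin (n+1) → ℤ := fun i => k' i / d with hm_def
      have hm : ∀ i, d * m i = k' i := fun i => Int.mul_ediv_cancel' (hdvd i)
      have hgm : Finset.univ.gcd m = 1 := Finset.gcd_div_eq_one (Finset.mem_univ i₀) hi₀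
      have hco : IsCoprime d kl := by
        rw [Int.isCoprime_iff_gcd_eq_one]
        have hdvd1 : ((Int.gcd d kl : ℤ)) ∣ 1 := by
          rw [← hg]
          refine Finset.dvd_gcd fun i _ => ?_
          induction i using Fin.lastCases with
          | last => exact Int.gcd_dvd_right _ _
          | cast i => exact dvd_trans (Int.gcd_dvd_left _ _) (hdvd i)
        exact Nat.dvd_one.mp (by exact_mod_cast hdvd1)
      -- sums
      have hm0 : (0:ℤ) ≤ ∑ j, |m j| := Finset.sum_nonneg fun j _ => abs_nonneg _
      have hsum' : ∑ j, |k' j| = |d| * ∑ j, |m j| := by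
        rw [Finset.mul_sum]
        refine Finset.sum_congr rfl fun j _ => ?_
        rw [← hm j, abs_mul]
      have hsumk : ∑ j : Fin (n+2), |k j| = (∑ j, |k' j|) + |kl| := by
        rw [Fin.sum_univ_castSucc]
      -- Bezout coefficients with bounds
      obtain ⟨e, c, hunit, hbound⟩ : ∃ e c : ℤ, IsUnit (d * e - c * kl) ∧
          |c| * (∑ j, |m j|) + |e| ≤ max 1 (∑ j : Fin (n+2), |k j|) := by
        by_cases hkl : kl = 0
        · refine ⟨d, 0, ?_, ?_⟩
          · have : IsUnit d := by
              rw [hkl] at hco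
              exact (isCoprime_zero_right).mp hco
            simpa using this.mul this
          · have : |d| = 1 := by
              rcases Int.isUnit_iff.mp ((isCoprime_zero_right).mp (hkl ▸ hco)) with h | h <;>
                rw [h] <;> norm_num
            simp [this]
        · obtain ⟨a, b, hab⟩ := hco
          have hklpos : (0:ℤ) < |kl| := abs_pos.mpr hkl
          set e : ℤ := a % |kl| with he_def
          have he0 : 0 ≤ e := Int.emod_nonneg a (by positivity)
          have he1 : e < |kl| := Int.emod_lt_of_pos a hklpos
          have hdvda : kl ∣ d * e - 1 := by
            have h1 : kl ∣ d * a - 1 := ⟨-b, by linear_combination hab⟩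
            have h2 : kl ∣ d * e - d * a := by
              have : d * e - d * a = -(d * (a / |kl|)) * |kl| := by
                rw [he_def, Int.emod_def]; ring
              rw [this]
              exact ((dvd_abs kl kl).mpr dvd_rfl).mul_left _
            have : d * e - 1 = (d * e - d * a) + (d * a - 1) := by ring
            rw [this]
            exact dvd_add h2 h1
          set c : ℤ := (d * e - 1) / kl with hc_def
          have hc : kl * c = d * e - 1 := Int.mul_ediv_cancel' hdvda
          have hval : d * e - c * kl = 1 := by linarith [hc, mul_comm kl c]
          have hcd : |c| ≤ |d| := by
            have h3 : |c| * |kl| ≤ |d| * |kl| := by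
              rw [← abs_mul]
              have : c * kl = d * e - 1 := by linarith [hc, mul_comm kl c]
              rw [this]
              have h4 : |d * e - 1| ≤ |d| * e + 1 := by
                calc |d * e - 1| ≤ |d * e| + |1| := abs_sub _ _
                  _ = |d| * e + 1 := by rw [abs_mul, abs_of_nonneg he0, abs_one]
              have h5 : |d| * e ≤ |d| * (|kl| - 1) :=
                mul_le_mul_of_nonneg_left (by omega) (abs_nonneg d)
              nlinarith
            exact le_of_mul_le_mul_right h3 hklpos
          refine ⟨e, c, hval ▸ isUnit_one, ?_⟩
          have h6 : |c| * (∑ j, |m j|) ≤ |d| * (∑ j, |m j|) :=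
            mul_le_mul_of_nonneg_right hcd hm0
          have h7 : (0:ℤ) ≤ ∑ j : Fin (n+2), |k j| :=
            Finset.sum_nonneg fun j _ => abs_nonneg _
          have h8 : ∑ j : Fin (n+2), |k j| ≤ max 1 (∑ j : Fin (n+2), |k j|) :=
            le_max_right _ _
          rw [abs_of_nonneg he0]
          linarith [hsum', hsumk]
      -- the matrix from the induction hypothesis
      obtain ⟨B, hBdet, hB0, hBrow⟩ := IH m hgm
      -- build B' = block diagonal (B, 1)
      set B' : Matrix (Fin (n+2)) (Fin (n+2)) ℤ :=
        Matrix.reindex (finSumFinEquiv : Fin (n+1) ⊕ Fin 1 ≃ Fin (n+2))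
          (finSumFinEquiv : Fin (n+1) ⊕ Fin 1 ≃ Fin (n+2))
          (Matrix.fromBlocks B 0 0 (1 : Matrix (Fin 1) (Fin 1) ℤ)) with hB'_def
      have hB'cc : ∀ (i j : Fin (n+1)), B' i.castSucc j.castSucc = B i j := by
        intro i j
        show (Matrix.fromBlocks B 0 0 (1 : Matrix (Fin 1) (Fin 1) ℤ))
          (finSumFinEquiv.symm (Fin.castAdd 1 i)) (finSumFinEquiv.symm (Fin.castAdd 1 j)) = _
        rw [finSumFinEquiv_symm_apply_castAdd, finSumFinEquiv_symm_apply_castAdd]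
        rfl
      have hB'cl : ∀ (i : Fin (n+1)), B' i.castSucc (Fin.last (n+1)) = 0 := by
        intro i
        show (Matrix.fromBlocks B 0 0 (1 : Matrix (Fin 1) (Fin 1) ℤ))
          (finSumFinEquiv.symm (Fin.castAdd 1 i)) (finSumFinEquiv.symm (Fin.last (n+1))) = _
        rw [finSumFinEquiv_symm_apply_castAdd, finSumFinEquiv_symm_last]
        rfl
      have hB'lc : ∀ (j : Fin (n+1)), B' (Fin.last (n+1)) j.castSucc = 0 := by
        intro j
        show (Matrix.fromBlocks B 0 0 (1 : Matrix (Fin 1) (Fin 1) ℤ))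
          (finSumFinEquiv.symm (Fin.last (n+1))) (finSumFinEquiv.symm (Fin.castAdd 1 j)) = _
        rw [finSumFinEquiv_symm_last, finSumFinEquiv_symm_apply_castAdd]
        rfl
      have hB'll : B' (Fin.last (n+1)) (Fin.last (n+1)) = 1 := by
        show (Matrix.fromBlocks B 0 0 (1 : Matrix (Fin 1) (Fin 1) ℤ))
          (finSumFinEquiv.symm (Fin.last (n+1))) (finSumFinEquiv.symm (Fin.last (n+1))) = _
        rw [finSumFinEquiv_symm_last]
        rfl
      have hdetB' : B'.det = B.det := by
        rw [hB'_def, Matrix.det_reindex_self, Matrix.det_fromBlocks_zero₂₁,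
          Matrix.det_one, mul_one]
      have h0l : (0 : Fin (n+2)) ≠ Fin.last (n+1) := by
        simp [Fin.ext_iff]
      set r0 : Fin (n+2) → ℤ := B' 0 with hr0_def
      set rl : Fin (n+2) → ℤ := B' (Fin.last (n+1)) with hrl_def
      have hr0c : ∀ i : Fin (n+1), r0 i.castSucc = m i := by
        intro i
        rw [hr0_def, show (0 : Fin (n+2)) = (0 : Fin (n+1)).castSucc from
          (Fin.castSucc_zero).symm, hB'cc, hB0]
      have hr0l : r0 (Fin.last (n+1)) = 0 := by
        rw [hr0_def, show (0 : Fin (n+2)) = (0 : Fin (n+1)).castSucc from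
          (Fin.castSucc_zero).symm, hB'cl]
      have hrlc : ∀ j : Fin (n+1), rl j.castSucc = 0 := fun j => hB'lc j
      have hrll : rl (Fin.last (n+1)) = 1 := hB'll
      set M : Matrix (Fin (n+2)) (Fin (n+2)) ℤ :=
        B'.updateRow 0 (d • r0 + kl • rl) with hM_def
      set A : Matrix (Fin (n+2)) (Fin (n+2)) ℤ :=
        M.updateRow (Fin.last (n+1)) (c • r0 + e • rl) with hA_def
      have hMl : M (Fin.last (n+1)) = rl := Matrix.updateRow_ne h0l.symm
      have hdetM : M.det = d * B'.det := by
        rw [hM_def, Matrix.det_updateRow_add, Matrix.det_updateRow_smul,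
          Matrix.det_updateRow_smul, Matrix.updateRow_eq_self]
        have hz : (B'.updateRow 0 rl).det = 0 := by
          refine Matrix.det_zero_of_row_eq h0l ?_
          rw [Matrix.updateRow_self, Matrix.updateRow_ne h0l.symm]
        rw [hz, mul_zero, add_zero]
      have hcomm : M.updateRow (Fin.last (n+1)) r0
          = (B'.updateRow (Fin.last (n+1)) r0).updateRow 0 (d • r0 + kl • rl) := by
        rw [hM_def]
        ext i j
        by_cases hi0 : i = 0
        · subst hi0
          rw [Matrix.updateRow_ne h0l, Matrix.updateRow_self, Matrix.updateRow_self]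
        · by_cases hil : i = Fin.last (n+1)
          · subst hil
            rw [Matrix.updateRow_self, Matrix.updateRow_ne hi0, Matrix.updateRow_self]
          · rw [Matrix.updateRow_ne hil, Matrix.updateRow_ne hi0, Matrix.updateRow_ne hi0,
              Matrix.updateRow_ne hil]
      have hswap : (B'.updateRow (Fin.last (n+1)) r0).updateRow 0 rl
          = B'.submatrix (Equiv.swap 0 (Fin.last (n+1))) id := by
        ext i j
        by_cases hi0 : i = 0
        · subst hi0
          rw [Matrix.updateRow_self, Matrix.submatrix_apply, Equiv.swap_apply_left, id]
        · by_cases hil : i = Fin.last (n+1)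
          · subst hil
            rw [Matrix.updateRow_ne hi0, Matrix.updateRow_self, Matrix.submatrix_apply,
              Equiv.swap_apply_right, id]
          · rw [Matrix.updateRow_ne hi0, Matrix.updateRow_ne hil, Matrix.submatrix_apply,
              Equiv.swap_apply_of_ne_of_ne hi0 hil, id]
      have hdetN : (M.updateRow (Fin.last (n+1)) r0).det = -(kl * B'.det) := by
        rw [hcomm, Matrix.det_updateRow_add, Matrix.det_updateRow_smul,
          Matrix.det_updateRow_smul]
        have hz : ((B'.updateRow (Fin.last (n+1)) r0).updateRow 0 r0).det = 0 := by
          refine Matrix.det_zero_of_row_eq h0l ?_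
          rw [Matrix.updateRow_self, Matrix.updateRow_ne h0l.symm, Matrix.updateRow_self]
        rw [hz, mul_zero, zero_add, hswap, Matrix.det_permute,
          Equiv.Perm.sign_swap h0l]
        push_cast
        ring
      have hdetA : A.det = (d * e - c * kl) * B'.det := by
        rw [hA_def, Matrix.det_updateRow_add, Matrix.det_updateRow_smul,
          Matrix.det_updateRow_smul, hdetN, ← hMl, Matrix.updateRow_eq_self, hdetM]
        ring
      refine ⟨A, ?_, ?_, ?_⟩
      · rw [hdetA]
        exact hunit.mul (hdetB' ▸ hBdet)
      · intro j
        have hA0 : A 0 = d • r0 + kl • rl := by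
          rw [hA_def, Matrix.updateRow_ne h0l, hM_def, Matrix.updateRow_self]
        rw [hA0]
        induction j using Fin.lastCases with
        | last => simp [hr0l, hrll]; exact hkl_def
        | cast j => simp only [Pi.add_apply, Pi.smul_apply, smul_eq_mul, hr0c, hrlc,
            mul_zero, add_zero]; exact hm j
      · intro i hi
        induction i using Fin.lastCases with
        | last =>
          have hAl : A (Fin.last (n+1)) = c • r0 + e • rl := Matrix.updateRow_self
          rw [hAl]
          have : (∑ j, |(c • r0 + e • rl) j|) = |c| * (∑ j, |m j|) + |e| := by
            rw [Fin.sum_univ_castSucc]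
            simp only [Pi.add_apply, Pi.smul_apply, smul_eq_mul, hr0c, hrlc, hr0l, hrll,
              mul_zero, zero_add, mul_one, add_zero]
            rw [Finset.mul_sum]
            congr 1
            exact Finset.sum_congr rfl fun j _ => abs_mul c (m j)
          rw [this]
          exact hbound
        | cast i =>
          have hic : i.castSucc ≠ 0 := by
            intro h
            exact hi h
          have hicl : i.castSucc ≠ Fin.last (n+1) := (Fin.castSucc_lt_last i).ne
          have hAi : A i.castSucc = B' i.castSucc := by
            rw [hA_def, Matrix.updateRow_ne hicl, hM_def, Matrix.updateRow_ne hic]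
          rw [hAi]
          have hIH : i ≠ 0 := by
            intro h; subst h; exact hic (Fin.castSucc_zero)
          have h9 : (∑ j, |B' i.castSucc j|) = ∑ j, |B i j| := by
            rw [Fin.sum_univ_castSucc]
            simp only [hB'cc, hB'cl, abs_zero, add_zero]
          rw [h9]
          refine le_trans (hBrow i hIH) ?_
          have h10 : (∑ j, |m j|) ≤ ∑ j : Fin (n+2), |k j| := by
            have : (∑ j, |m j|) ≤ |d| * ∑ j, |m j| := le_mul_of_one_le_left hm0 hd1
            have h11 : (0:ℤ) ≤ |kl| := abs_nonneg _
            linarith [hsum', hsumk]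
          exact max_le_max (le_refl 1) h10
theorem stmt_3 (n : ℕ) (hn : 0 < n) (K : ℝ) (hK : 1 ≤ K)
    (k : Fin n → ℤ) (hk : k ≠ 0) (hcop : Finset.univ.gcd k = 1)
    (hnorm : (∑ i, (|k i| : ℝ)) ≤ K) :
    ∃ A : Matrix (Fin n) (Fin n) ℤ,
      (A.det = 1 ∨ A.det = -1) ∧
      (∀ j, A ⟨0, hn⟩ j = k j) ∧
      (∀ i, (∑ j, (|A i j| : ℝ)) ≤ K) := by
  obtain ⟨n', rfl⟩ : ∃ n', n = n' + 1 := ⟨n - 1, by omega⟩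
  obtain ⟨A, hdet, h0, hrow⟩ := aux_gl n' k hcop
  have h00 : (⟨0, hn⟩ : Fin (n' + 1)) = 0 := rfl
  have hcast : ((∑ j, |k j| : ℤ) : ℝ) ≤ K := by
    push_cast
    exact hnorm
  refine ⟨A, Int.isUnit_iff.mp hdet, by rw [h00]; exact h0, ?_⟩
  intro i
  by_cases hi : i = 0
  · subst hi
    calc (∑ j, (|A 0 j| : ℝ)) = ∑ j, (|k j| : ℝ) := by
          refine Finset.sum_congr rfl fun j _ => ?_
          rw [h0 j]
      _ ≤ K := hnorm
  · have h1 : (∑ j, |A i j|) ≤ max 1 (∑ j, |k j|) := hrow i hi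
    have h2 : ((∑ j, |A i j| : ℤ) : ℝ) ≤ ((max 1 (∑ j, |k j|) : ℤ) : ℝ) :=
      Int.cast_le.mpr h1
    rw [Int.cast_max] at h2
    calc (∑ j, (|A i j| : ℝ)) = ((∑ j, |A i j| : ℤ) : ℝ) := by push_cast; rfl
      _ ≤ max ((1:ℤ):ℝ) ((∑ j, |k j| : ℤ) : ℝ) := h2
      _ ≤ K := by
          rw [max_le_iff]
          exact ⟨by norm_num; exact hK, hcast⟩
end

section
/- Let k = (k₁,…,kₙ) ∈ ℤⁿ with n ≥ 2, k_* = (k₁,…,k_{n-1}) ≠ 0, d = gcd(k₁,…,k_{n-1}), and gcd(d, kₙ) = 1 (i.e. the components of k are coprime). Suppose B ∈ GL(n-1,ℤ) has first row equal to d⁻¹·k_* and every row of B has ℓ¹-norm at most K, and suppose Σᵢ |kᵢ| ≤ K. Then there exists A ∈ GL(n,ℤ) whose first row equals k and whose every row has ℓ¹-norm at most K. -/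
open Matrix in
lemma my_updateRow_comm {n R : Type*} [DecidableEq n] (M : Matrix n n R) {i j : n}
    (h : i ≠ j) (r s : n → R) :
    updateRow (updateRow M i r) j s = updateRow (updateRow M j s) i r := by
  ext a b
  rcases eq_or_ne a j with rfl | haj
  · simp [Matrix.updateRow_apply, h.symm]
  · rcases eq_or_ne a i with rfl | hai
    · simp [Matrix.updateRow_apply, h, haj]
    · simp [Matrix.updateRow_apply, hai, haj]

lemma my_bezout (d t : ℤ) (hd : 0 < d) (h : Int.gcd d t = 1) :
    ∃ u v : ℤ, u * d - v * t = 1 ∧ 0 ≤ v ∧ v ≤ d - 1 ∧ d * |u| ≤ 1 + (d - 1) * |t| := by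
  obtain ⟨a, b, hab⟩ := (Int.isCoprime_iff_gcd_eq_one.mpr h)
  obtain ⟨v₀, h1⟩ : ∃ v₀, a * d - v₀ * t = 1 := ⟨-b, by linarith⟩
  set q := v₀ / d with hq
  set v := v₀ % d with hv
  have hsplit : v₀ = d * q + v := by rw [hq, hv]; have := Int.emod_add_mul_ediv v₀ d; linarith
  have hv0 : 0 ≤ v := Int.emod_nonneg _ hd.ne'
  have hv1 : v ≤ d - 1 := by have := Int.emod_lt_of_pos v₀ hd; omega
  have hud : (a - q * t) * d = 1 + v * t := by linear_combination h1 + t * hsplit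
  refine ⟨a - q * t, v, by linarith, hv0, hv1, ?_⟩
  have h2 : d * |a - q * t| = |1 + v * t| := by
    rw [← hud, abs_mul, abs_of_pos hd]; ring
  rw [h2]
  have h3 : |1 + v * t| ≤ 1 + v * |t| :=
    (abs_add_le 1 (v * t)).trans (by rw [abs_one, abs_mul, abs_of_nonneg hv0])
  nlinarith [abs_nonneg t]

theorem stmt_6 (m : ℕ) (K : ℝ) (hK : 1 ≤ K)
    (k : Fin (m + 2) → ℤ)
    (hstar : (fun i : Fin (m + 1) => k i.castSucc) ≠ 0)
    (d : ℤ) (hd : d = Finset.univ.gcd (fun i : Fin (m + 1) => k i.castSucc))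
    (hcop : Int.gcd d (k (Fin.last (m + 1))) = 1)
    (B : Matrix (Fin (m + 1)) (Fin (m + 1)) ℤ)
    (hBdet : B.det = 1 ∨ B.det = -1)
    (hBrow1 : ∀ j, d * B 0 j = k j.castSucc)
    (hBnorm : ∀ i, (∑ j, (|B i j| : ℝ)) ≤ K)
    (hknorm : (∑ i, (|k i| : ℝ)) ≤ K) :
    ∃ A : Matrix (Fin (m + 2)) (Fin (m + 2)) ℤ,
      (A.det = 1 ∨ A.det = -1) ∧
      (∀ j, A 0 j = k j) ∧
      (∀ i, (∑ j, (|A i j| : ℝ)) ≤ K) := by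
  classical
  have hdne : d ≠ 0 := by
    intro h0
    apply hstar
    funext i
    have := hBrow1 i
    rw [h0] at this
    simpa using this.symm
  have hdpos : 0 < d := by
    have habs : |d| = d := by rw [Int.abs_eq_normalize, hd, Finset.normalize_gcd]
    have := abs_nonneg d
    omega
  set t := k (Fin.last (m + 1)) with ht
  obtain ⟨u, v, huv, hv0, hv1, hu⟩ := my_bezout d t hdpos hcop
  -- the block extension of B
  set B' : Matrix (Fin (m + 2)) (Fin (m + 2)) ℤ :=
    (Matrix.reindex (finSumFinEquiv (m := m + 1) (n := 1))
        (finSumFinEquiv (m := m + 1) (n := 1)))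
      (Matrix.fromBlocks B 0 0 (1 : Matrix (Fin 1) (Fin 1) ℤ)) with hB'
  have hcc : ∀ i j : Fin (m + 1), B' i.castSucc j.castSucc = B i j := by
    intro i j
    simp [hB', Matrix.reindex_apply, Fin.castSucc]
  have hcl : ∀ i : Fin (m + 1), B' i.castSucc (Fin.last (m + 1)) = 0 := by
    intro i
    simp [hB', Matrix.reindex_apply, Fin.castSucc]
  have hlc : ∀ j : Fin (m + 1), B' (Fin.last (m + 1)) j.castSucc = 0 := by
    intro j
    simp [hB', Matrix.reindex_apply, Fin.castSucc]
  have hll : B' (Fin.last (m + 1)) (Fin.last (m + 1)) = 1 := by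
    simp [hB', Matrix.reindex_apply]
  have hB'det : B'.det = B.det := by
    rw [hB', Matrix.reindex_apply, Matrix.det_submatrix_equiv_self,
      Matrix.det_fromBlocks_zero₂₁]
    simp
  have h0l : (0 : Fin (m + 2)) ≠ Fin.last (m + 1) := by
    simp [Fin.ext_iff]
  have hz : (0 : Fin (m + 2)) = (0 : Fin (m + 1)).castSucc := by
    exact (Fin.castSucc_zero).symm
  set A : Matrix (Fin (m + 2)) (Fin (m + 2)) ℤ :=
    Matrix.updateRow
      (Matrix.updateRow B' (Fin.last (m + 1)) (v • B' 0 + u • B' (Fin.last (m + 1)))) 0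
      (d • B' 0 + t • B' (Fin.last (m + 1))) with hA
  have hA0row : A 0 = d • B' 0 + t • B' (Fin.last (m + 1)) := by
    rw [hA, Matrix.updateRow_self]
  have hAlrow : A (Fin.last (m + 1)) = v • B' 0 + u • B' (Fin.last (m + 1)) := by
    rw [hA, Matrix.updateRow_ne h0l.symm, Matrix.updateRow_self]
  have hAmid : ∀ i : Fin (m + 1), i ≠ 0 → A i.castSucc = B' i.castSucc := by
    intro i hi
    have h1 : i.castSucc ≠ (0 : Fin (m + 2)) := by
      rw [hz]; exact fun hh => hi (Fin.castSucc_injective _ hh)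
    have h2 : i.castSucc ≠ Fin.last (m + 1) := (Fin.castSucc_lt_last i).ne
    rw [hA, Matrix.updateRow_ne h1, Matrix.updateRow_ne h2]
  -- determinant
  have hdet : A.det = B'.det := by
    have e0 : (Matrix.updateRow B' (Fin.last (m + 1)) (B' 0)).det = 0 :=
      Matrix.det_zero_of_row_eq h0l
        (by rw [Matrix.updateRow_ne h0l, Matrix.updateRow_self])
    have e1 :
        ((Matrix.updateRow B' (Fin.last (m + 1))
            (v • B' 0 + u • B' (Fin.last (m + 1)))).updateRow 0 (B' 0)).det
          = u * B'.det := by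
      rw [my_updateRow_comm B' (Ne.symm h0l) _ (B' 0), Matrix.updateRow_eq_self,
        Matrix.det_updateRow_add, Matrix.det_updateRow_smul, Matrix.det_updateRow_smul,
        e0, Matrix.updateRow_eq_self]
      ring
    have e2 :
        ((Matrix.updateRow B' (Fin.last (m + 1))
            (v • B' 0 + u • B' (Fin.last (m + 1)))).updateRow 0
              (B' (Fin.last (m + 1)))).det = -(v * B'.det) := by
      rw [my_updateRow_comm B' (Ne.symm h0l) _ (B' (Fin.last (m + 1)))]
      rw [Matrix.det_updateRow_add, Matrix.det_updateRow_smul, Matrix.det_updateRow_smul]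
      have ez2 : ((Matrix.updateRow B' 0 (B' (Fin.last (m + 1)))).updateRow
          (Fin.last (m + 1)) (B' (Fin.last (m + 1)))).det = 0 :=
        Matrix.det_zero_of_row_eq h0l
          (by rw [Matrix.updateRow_ne h0l, Matrix.updateRow_self, Matrix.updateRow_self])
      have ez1 : ((Matrix.updateRow B' 0 (B' (Fin.last (m + 1)))).updateRow
          (Fin.last (m + 1)) (B' 0)).det = -B'.det := by
        have hswap : (Matrix.updateRow B' 0 (B' (Fin.last (m + 1)))).updateRow
            (Fin.last (m + 1)) (B' 0)
            = B'.submatrix (Equiv.swap (0 : Fin (m + 2)) (Fin.last (m + 1))) id := by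
          ext a c
          rcases eq_or_ne a (Fin.last (m + 1)) with rfl | hal
          · simp [Equiv.swap_apply_right]
          · rcases eq_or_ne a 0 with rfl | ha0
            · simp [Matrix.updateRow_ne hal, Equiv.swap_apply_left]
            · simp [Matrix.updateRow_ne hal, Matrix.updateRow_ne ha0,
                Equiv.swap_apply_of_ne_of_ne ha0 hal]
        rw [hswap, Matrix.det_permute, Equiv.Perm.sign_swap h0l]
        simp
      rw [ez1, ez2]
      ring
    rw [hA, Matrix.det_updateRow_add, Matrix.det_updateRow_smul, Matrix.det_updateRow_smul,
      e1, e2]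
    linear_combination B'.det * huv
  have hA0 : ∀ j, A 0 j = k j := by
    intro j
    rw [hA0row]
    refine Fin.lastCases ?_ (fun j' => ?_) j
    · simp only [Pi.add_apply, Pi.smul_apply, smul_eq_mul]
      rw [hz, hcl, hll, ht]
      ring
    · simp only [Pi.add_apply, Pi.smul_apply, smul_eq_mul]
      rw [hz, hcc, hlc, ← hBrow1 j']
      ring
  refine ⟨A, ?_, hA0, ?_⟩
  · rw [hdet, hB'det]; exact hBdet
  · intro i
    refine Fin.lastCases ?_ (fun i' => ?_) i
    · -- last row
      have hrow : ∀ j, A (Fin.last (m + 1)) j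
          = v * B' 0 j + u * B' (Fin.last (m + 1)) j := by
        intro j
        rw [hAlrow]
        simp [Pi.add_apply, Pi.smul_apply]
      have hsum : ∑ j, (|A (Fin.last (m + 1)) j| : ℝ)
          = (∑ j' : Fin (m + 1), (|v * B 0 j'| : ℝ)) + |(u : ℝ)| := by
        rw [Fin.sum_univ_castSucc]
        congr 1
        · refine Finset.sum_congr rfl fun j' _ => ?_
          rw [hrow, hz, hcc, hlc]
          norm_num
        · rw [hrow, hz, hcl, hll]
          norm_num
      rw [hsum]
      have hdR : (0 : ℝ) < (d : ℝ) := by exact_mod_cast hdpos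
      rw [← mul_le_mul_iff_right₀ hdR]
      have hSB : (d : ℝ) * ∑ j' : Fin (m + 1), (|v * B 0 j'| : ℝ)
          = (|(v : ℝ)|) * ∑ j' : Fin (m + 1), (|k j'.castSucc| : ℝ) := by
        rw [Finset.mul_sum, Finset.mul_sum]
        refine Finset.sum_congr rfl fun j' _ => ?_
        rw [← hBrow1 j']
        push_cast [abs_mul]
        rw [abs_of_pos hdR]
        ring
      have hS : (∑ j' : Fin (m + 1), (|k j'.castSucc| : ℝ)) + |(t : ℝ)| ≤ K := by
        have h5 := hknorm
        rw [Fin.sum_univ_castSucc] at h5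
        exact h5
      have hSnn : (0 : ℝ) ≤ ∑ j' : Fin (m + 1), (|k j'.castSucc| : ℝ) :=
        Finset.sum_nonneg fun _ _ => by positivity
      have huR : (d : ℝ) * |(u : ℝ)| ≤ 1 + ((d : ℝ) - 1) * |(t : ℝ)| := by
        exact_mod_cast hu
      have hv1R : |(v : ℝ)| ≤ (d : ℝ) - 1 := by
        rw [abs_of_nonneg (by exact_mod_cast hv0 : (0:ℝ) ≤ (v:ℝ))]
        exact_mod_cast hv1
      have htnn : (0 : ℝ) ≤ |(t : ℝ)| := abs_nonneg _
      have hvnn : (0 : ℝ) ≤ |(v : ℝ)| := abs_nonneg _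
      rw [mul_add, hSB]
      nlinarith [hS, hSnn, huR, hv1R, htnn, hK, hdR, hvnn]
    · rcases eq_or_ne i' 0 with rfl | hi0
      · rw [← hz]
        calc ∑ j, (|A 0 j| : ℝ) = ∑ j, (|k j| : ℝ) :=
              Finset.sum_congr rfl fun j _ => by rw [hA0 j]
          _ ≤ K := hknorm
      · rw [hAmid i' hi0, Fin.sum_univ_castSucc]
        calc (∑ j' : Fin (m + 1), (|B' i'.castSucc j'.castSucc| : ℝ))
              + (|B' i'.castSucc (Fin.last (m + 1))| : ℝ)
            = ∑ j' : Fin (m + 1), (|B i' j'| : ℝ) := by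
              rw [hcl i']
              simp only [abs_zero, Int.cast_zero, add_zero]
              exact Finset.sum_congr rfl fun j' _ => by rw [hcc]
          _ ≤ K := hBnorm i'
end

section
/- Let ω : [0,T] → ℝⁿ be continuous with ω(t) ≠ 0 for all t, let i,j be indices with |ω(t')| = |ω_j(t')| (supremum norm attained at coordinate j at time t'), and suppose |ω_i(t*)/‖ω(t*)‖ − ω_i(0)/‖ω(0)‖| ≥ 6/K for some t* ∈ [0,T] and K ≥ 1, where ‖·‖ is the supremum norm. Then there exists t' ∈ [0,t*], a nonzero vector k ∈ ℤⁿ of the form k = q·eᵢ − p·e_j with p, q coprime integers, q ≥ 1, |p| + |q| < K, an index j, and k·ω(t') = 0. -/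
theorem stmt_9 (n : ℕ) (T : ℝ) (hT : 0 ≤ T)
    (ω : ℝ → (Fin n → ℝ))
    (hcont : ContinuousOn ω (Set.Icc 0 T))
    (hnz : ∀ t ∈ Set.Icc 0 T, ω t ≠ 0)
    (K : ℝ) (hK : 1 ≤ K)
    (i : Fin n) (tstar : ℝ) (htstar : tstar ∈ Set.Icc 0 T)
    (hgap : 6 / K ≤ |ω tstar i / ‖ω tstar‖ - ω 0 i / ‖ω 0‖|) :
    ∃ t' ∈ Set.Icc 0 tstar, ∃ (j : Fin n) (p q : ℤ),
      1 ≤ q ∧ IsCoprime p q ∧ ((|p| : ℤ) : ℝ) + ((|q| : ℤ) : ℝ) < K ∧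
      (q • Pi.single i (1 : ℤ) - p • Pi.single j (1 : ℤ) : Fin n → ℤ) ≠ 0 ∧
      (∑ l, (((q • Pi.single i (1 : ℤ) - p • Pi.single j (1 : ℤ) : Fin n → ℤ)) l : ℝ) * ω t' l) = 0 := by
  have hK0 : (0:ℝ) < K := lt_of_lt_of_le one_pos hK
  obtain ⟨htstar0, htstarT⟩ := htstar
  have hsub : Set.Icc (0:ℝ) tstar ⊆ Set.Icc 0 T := Set.Icc_subset_Icc le_rfl htstarT
  set f : ℝ → ℝ := fun t => ω t i / ‖ω t‖ with hf
  have hnormpos : ∀ t ∈ Set.Icc (0:ℝ) tstar, 0 < ‖ω t‖ := fun t ht =>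
    norm_pos_iff.mpr (hnz t (hsub ht))
  have hfcont : ContinuousOn f (Set.Icc 0 tstar) := by
    apply ContinuousOn.div
    · exact (continuous_apply i).comp_continuousOn (hcont.mono hsub)
    · exact (hcont.mono hsub).norm
    · exact fun t ht => (hnormpos t ht).ne'
  have hfbound : ∀ t ∈ Set.Icc (0:ℝ) tstar, |f t| ≤ 1 := by
    intro t ht
    rw [hf, abs_div, abs_norm, div_le_one (hnormpos t ht)]
    simpa [Real.norm_eq_abs] using norm_le_pi_norm (ω t) i
  have h0mem : (0:ℝ) ∈ Set.Icc (0:ℝ) tstar := ⟨le_rfl, htstar0⟩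
  have hsmem : tstar ∈ Set.Icc (0:ℝ) tstar := ⟨htstar0, le_rfl⟩
  have hf0 := hfbound 0 h0mem
  have hfs := hfbound tstar hsmem
  rw [abs_le] at hf0 hfs
  have hK3 : (3:ℝ) ≤ K := by
    have h2 : 6 / K ≤ 2 := le_trans hgap (by rw [abs_sub_le_iff]; constructor <;> [skip; skip] <;> linarith)
    rw [div_le_iff₀ hK0] at h2; linarith
  set a : ℝ := min (f 0) (f tstar) with ha
  set b : ℝ := max (f 0) (f tstar) with hb
  have hba : 6 / K ≤ b - a := by
    rw [ha, hb, max_sub_min_eq_abs', hf]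
    simpa [abs_sub_comm] using hgap
  have ha1 : -1 ≤ a := le_min hf0.1 hfs.1
  have hb1 : b ≤ 1 := max_le hf0.2 hfs.2
  set q0 : ℤ := ⌈K/3⌉ with hq0def
  have hq0R : K/3 ≤ (q0:ℝ) := Int.le_ceil _
  have hq0pos : (0:ℝ) < q0 := lt_of_lt_of_le (by linarith) hq0R
  have hq0posZ : (0:ℤ) < q0 := by exact_mod_cast hq0pos
  have hq0lt : (q0:ℝ) < K/3 + 1 := Int.ceil_lt_add_one _
  set p0 : ℤ := ⌊(q0:ℝ) * a⌋ + 1 with hp0def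
  have hp0gt : (q0:ℝ) * a < p0 := by
    push_cast [hp0def]; exact Int.lt_floor_add_one _
  have hp0le : (p0:ℝ) ≤ (q0:ℝ) * a + 1 := by
    push_cast [hp0def]; have := Int.floor_le ((q0:ℝ) * a); linarith
  set r : ℚ := (p0 : ℚ) / (q0 : ℚ) with hrdef
  have hrR : (r:ℝ) = (p0:ℝ) / (q0:ℝ) := by push_cast [hrdef]; ring
  have hinvq0 : 1 / (q0:ℝ) ≤ 3 / K := by
    rw [div_le_div_iff₀ hq0pos hK0]; linarith
  have hra : a < (r:ℝ) := by
    rw [hrR, lt_div_iff₀ hq0pos]; linarith [hp0gt]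
  have hrb : (r:ℝ) ≤ a + 3 / K := by
    have h1 : (r:ℝ) ≤ a + 1 / (q0:ℝ) := by
      rw [hrR, div_le_iff₀ hq0pos]
      have h2 : (a + 1/(q0:ℝ)) * q0 = q0 * a + 1 := by field_simp
      linarith [hp0le]
    linarith
  have hKpos3 : (0:ℝ) < 3 / K := by positivity
  have hrltb : (r:ℝ) < b := by
    have h6 : 6 / K = 3 / K + 3 / K := by ring
    have : a + 3 / K ≤ b - 3 / K := by linarith
    linarith
  have hrlt1 : (r:ℝ) < 1 := lt_of_lt_of_le hrltb hb1
  have hrgtm1 : (-1:ℝ) < (r:ℝ) := lt_of_le_of_lt ha1 hra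
  -- IVT
  have hmem : (r:ℝ) ∈ Set.uIcc (f 0) (f tstar) := by
    rw [Set.uIcc]; exact ⟨le_of_lt hra, le_of_lt hrltb⟩
  have hiv := intermediate_value_uIcc (f := f) (a := 0) (b := tstar)
    (by rwa [Set.uIcc_of_le htstar0])
  obtain ⟨t', ht', hft'⟩ := hiv hmem
  rw [Set.uIcc_of_le htstar0] at ht'
  rw [hf] at hft'
  -- choose j attaining the sup norm
  have hne : Nonempty (Fin n) := by
    rcases Nat.eq_zero_or_pos n with h | h
    · exfalso; apply hnz 0 ⟨le_rfl, hT⟩; funext l; exact absurd l.isLt (by omega)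
    · exact ⟨⟨0, h⟩⟩
  obtain ⟨j, -, hj⟩ := Finset.exists_mem_eq_sup (Finset.univ : Finset (Fin n))
    Finset.univ_nonempty (fun l => ‖ω t' l‖₊)
  have hnormj : ‖ω t'‖ = |ω t' j| := by
    rw [Pi.norm_def, hj]; simp [Real.norm_eq_abs]
  -- rational facts
  have hdenpos : 0 < (r.den:ℤ) := by exact_mod_cast r.pos
  have hdendvd : (r.den:ℤ) ∣ q0 := by
    rw [hrdef, ← Rat.divInt_eq_div]; exact Rat.den_dvd p0 q0
  have hdenle : (r.den:ℤ) ≤ q0 := Int.le_of_dvd hq0posZ hdendvd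
  have hrabs : |(r:ℝ)| < 1 := abs_lt.mpr ⟨hrgtm1, hrlt1⟩
  have hnumden : ((r.num:ℝ)) = (r:ℝ) * (r.den:ℝ) := by
    rw [Rat.cast_def]; field_simp
  have hnumlt : |r.num| < (r.den:ℤ) := by
    have hR : |(r.num:ℝ)| < (r.den:ℝ) := by
      rw [hnumden, abs_mul, abs_of_pos (by exact_mod_cast hdenpos : (0:ℝ) < (r.den:ℝ))]
      nlinarith [abs_nonneg (r:ℝ), (by exact_mod_cast hdenpos : (0:ℝ) < (r.den:ℝ))]
    exact_mod_cast (by push_cast at hR ⊢; exact hR : ((|r.num|:ℤ):ℝ) < ((r.den:ℤ):ℝ))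
  -- key equation at t'
  have hnorm' : 0 < ‖ω t'‖ := hnormpos t' ht'
  have heq : ω t' i = (r:ℝ) * ‖ω t'‖ := by
    have : ω t' i / ‖ω t'‖ = (r:ℝ) := hft'
    field_simp at this; linarith [this]
  have hden_eq : (r.den:ℝ) * ω t' i = (r.num:ℝ) * ‖ω t'‖ := by
    rw [heq, hnumden]; ring
  set p : ℤ := if 0 ≤ ω t' j then r.num else -r.num with hpdef
  have hp_eq : (p:ℝ) * ω t' j = (r.num:ℝ) * ‖ω t'‖ := by
    rw [hpdef]; split_ifs with hsign
    · rw [hnormj, abs_of_nonneg hsign]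
    · push_cast
      rw [hnormj, abs_of_neg (lt_of_not_ge hsign)]; ring
  have hpabs : |p| = |r.num| := by
    rw [hpdef]; split_ifs <;> simp [abs_neg]
  refine ⟨t', ht', j, p, r.den, by exact_mod_cast r.pos, ?_, ?_, ?_, ?_⟩
  · -- coprime
    rw [Int.isCoprime_iff_gcd_eq_one]
    have : p.natAbs = r.num.natAbs := by rw [hpdef]; split_ifs <;> simp
    rw [Int.gcd, this, Int.natAbs_natCast]
    exact r.reduced
  · -- size bound
    have hd : |((r.den:ℤ))| = ((r.den:ℤ)) := abs_of_pos hdenpos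
    rw [hpabs, hd]
    have h0 : |r.num| + 1 ≤ (r.den:ℤ) := hnumlt
    have h1 : ((|r.num|:ℤ):ℝ) + 1 ≤ ((r.den:ℤ):ℝ) := by exact_mod_cast h0
    have h2 : ((r.den:ℤ):ℝ) ≤ (q0:ℝ) := by exact_mod_cast hdenle
    linarith
  · -- nonzero
    intro hzero
    have hi := congrFun hzero i
    have h4 : |p| < (r.den:ℤ) := by rw [hpabs]; exact hnumlt
    by_cases hij : i = j
    · subst hij
      simp [Pi.single_apply] at hi
      linarith [le_abs_self p, h4, hi]
    · simp [Pi.single_apply, hij] at hi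
  · -- the sum
    have : ∀ l, (((r.den:ℤ) • Pi.single i (1 : ℤ) - p • Pi.single j (1 : ℤ) : Fin n → ℤ) l : ℝ) * ω t' l
        = (if l = i then (r.den:ℝ) * ω t' l else 0) - (if l = j then (p:ℝ) * ω t' l else 0) := by
      intro l
      simp only [Pi.sub_apply, Pi.smul_apply, smul_eq_mul, Pi.single_apply]
      split_ifs <;> push_cast <;> ring
    rw [Finset.sum_congr rfl (fun l _ => this l), Finset.sum_sub_distrib,
      Finset.sum_ite_eq' Finset.univ i, Finset.sum_ite_eq' Finset.univ j]
    simp only [Finset.mem_univ, if_true]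
    rw [hden_eq, hp_eq]; ring
end

section
/- Let f : [a,b] → ℝ be continuous with |f(b) − f(a)| ≥ l and f([a,b]) ⊆ [−1,1] for some l with 0 < l ≤ 2. Then there exist coprime integers p, q with q ≥ 1, |p| + |q| < 6/l, and a point t ∈ [a,b] such that f(t) = p/q. -/
theorem stmt_10 (a b : ℝ) (hab : a ≤ b) (f : ℝ → ℝ)
    (hcont : ContinuousOn f (Set.Icc a b))
    (l : ℝ) (hl : 0 < l) (hl2 : l ≤ 2)
    (hgap : l ≤ |f b - f a|)
    (himg : ∀ t ∈ Set.Icc a b, f t ∈ Set.Icc (-1 : ℝ) 1) :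
    ∃ p q : ℤ, IsCoprime p q ∧ 1 ≤ q ∧ ((|p| : ℤ) : ℝ) + ((|q| : ℤ) : ℝ) < 6 / l ∧
      ∃ t ∈ Set.Icc a b, f t = (p : ℝ) / q := by
  have ha : a ∈ Set.Icc a b := ⟨le_rfl, hab⟩
  have hb : b ∈ Set.Icc a b := ⟨hab, le_rfl⟩
  set c : ℝ := min (f a) (f b) with hc
  set d : ℝ := max (f a) (f b) with hd
  have hdc : l ≤ d - c := by
    rcases abs_cases (f b - f a) with ⟨h1, h2⟩ | ⟨h1, h2⟩ <;>
      simp only [hc, hd] <;> rcases min_cases (f a) (f b) with ⟨h3, h4⟩ | ⟨h3, h4⟩ <;>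
      rcases max_cases (f a) (f b) with ⟨h5, h6⟩ | ⟨h5, h6⟩ <;> rw [h1] at hgap <;>
      linarith
  have hc1 : -1 ≤ c := le_min (himg a ha).1 (himg b hb).1
  have hd1 : d ≤ 1 := max_le (himg a ha).2 (himg b hb).2
  -- choose q0 and p0
  set q0 : ℕ := ⌈1 / l⌉₊ with hq0
  have hq0pos : 0 < q0 := Nat.ceil_pos.mpr (by positivity)
  have hq0l : 1 ≤ (q0 : ℝ) * l := by
    have := Nat.le_ceil (1 / l)
    rw [div_le_iff₀ hl] at this
    linarith
  have hq0lt : (q0 : ℝ) < 3 / l := by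
    have h1 : (q0 : ℝ) < 1 / l + 1 := by
      have := Nat.ceil_lt_add_one (a := 1 / l) (by positivity)
      exact_mod_cast this
    have h2 : (1 : ℝ) ≤ 2 / l := by rw [le_div_iff₀ hl]; linarith
    have : 1 / l + 2 / l = 3 / l := by ring
    linarith
  set p0 : ℤ := ⌈(q0 : ℝ) * c⌉ with hp0
  have hq0R : (0 : ℝ) < (q0 : ℝ) := by exact_mod_cast hq0pos
  have hclb : c ≤ (p0 : ℝ) / q0 := by
    rw [le_div_iff₀ hq0R]
    have := Int.le_ceil ((q0 : ℝ) * c)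
    linarith [this]
  have hdub : (p0 : ℝ) / q0 ≤ d := by
    rw [div_le_iff₀ hq0R]
    have h1 : (p0 : ℝ) < (q0 : ℝ) * c + 1 := Int.ceil_lt_add_one _
    have h2 : (q0 : ℝ) * c + (q0 : ℝ) * l ≤ (q0 : ℝ) * d := by
      have : (q0 : ℝ) * (c + l) ≤ (q0 : ℝ) * d :=
        mul_le_mul_of_nonneg_left (by linarith) (le_of_lt hq0R)
      linarith [this]
    nlinarith
  -- reduce p0/q0
  set r : ℚ := (p0 : ℚ) / (q0 : ℚ) with hr
  refine ⟨r.num, (r.den : ℤ), ?_, by exact_mod_cast r.pos, ?_, ?_⟩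
  · rw [Int.isCoprime_iff_gcd_eq_one]
    exact_mod_cast r.reduced
  · -- bound
    have hdvd : (r.den : ℤ) ∣ (q0 : ℤ) := by
      have := Rat.den_dvd p0 (q0 : ℤ)
      rwa [Rat.divInt_eq_div, show ((q0 : ℤ) : ℚ) = (q0 : ℚ) by push_cast; ring] at this
    have hden_le : (r.den : ℤ) ≤ (q0 : ℤ) := Int.le_of_dvd (by exact_mod_cast hq0pos) hdvd
    have hrcast : ((r : ℝ)) = (p0 : ℝ) / q0 := by
      rw [hr]; push_cast; ring
    have habs : |(r : ℝ)| ≤ 1 := by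
      rw [hrcast, abs_le]; constructor <;> linarith
    have hnum : |r.num| ≤ (r.den : ℤ) := by
      have h := Rat.num_div_den r
      have hdR : (0 : ℝ) < (r.den : ℝ) := by exact_mod_cast r.pos
      have : |(r.num : ℝ)| ≤ (r.den : ℝ) := by
        have h2 : (r : ℝ) = (r.num : ℝ) / (r.den : ℝ) := by rw [Rat.cast_def]
        rw [h2, abs_div, abs_of_pos hdR, div_le_one hdR] at habs
        exact habs
      exact_mod_cast this
    have : ((|r.num| : ℤ) : ℝ) + ((|(r.den : ℤ)| : ℤ) : ℝ) ≤ 2 * (q0 : ℝ) := by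
      rw [abs_of_nonneg (by positivity : (0:ℤ) ≤ (r.den : ℤ))]
      have h1 : ((|r.num| : ℤ) : ℝ) ≤ ((r.den : ℤ) : ℝ) := by exact_mod_cast hnum
      have h2 : (((r.den : ℤ)) : ℝ) ≤ (q0 : ℝ) := by exact_mod_cast hden_le
      push_cast at h1 h2 ⊢
      linarith
    have h6 : 2 * (q0 : ℝ) < 6 / l := by
      have : 2 * (3 / l) = 6 / l := by ring
      linarith
    linarith
  · -- IVT
    have hmem : (r : ℝ) ∈ Set.uIcc (f a) (f b) := by
      rw [Set.uIcc, Set.mem_Icc]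
      have hrcast : ((r : ℝ)) = (p0 : ℝ) / q0 := by rw [hr]; push_cast; ring
      rw [hrcast]
      exact ⟨hclb, hdub⟩
    have hsub := intermediate_value_uIcc (by rwa [Set.uIcc_of_le hab] : ContinuousOn f (Set.uIcc a b))
    obtain ⟨t, ht, hft⟩ := hsub hmem
    rw [Set.uIcc_of_le hab] at ht
    refine ⟨t, ht, ?_⟩
    rw [hft]
    rw [show ((r.den : ℤ) : ℝ) = (r.den : ℝ) by push_cast; ring]
    rw [← Rat.cast_def]
end
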